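/- Let P be a finite graded poset of level r, i.e., there is a function d : P → {1,…,r} such that d⁻¹(1) and d⁻¹(r) are nonempty and d(y) = d(x) + 1 whenever y covers x. Assume moreover that d⁻¹(1) equals the set of minimal elements of P and d⁻¹(r) equals the set of maximal elements of P. Then the reverse operator 𝔛 has an orbit of cardinality r + 1 on the set of antichains of P; namely, 𝔛(d⁻¹(i)) = d⁻¹(i−1) for i = 2,…,r, 𝔛(d⁻¹(1)) = ∅, and 𝔛(∅) = d⁻¹(r), so that {∅, d⁻¹(r), …, d⁻¹(1)} is an 𝔛-orbit. -/

import Mathlib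

open Finset

variable {P : Type*} [Fintype P] [DecidableEq P] [PartialOrder P]
  [DecidableRel ((· ≤ ·) : P → P → Prop)]

/-- The upper ideal (filter) generated by a subset `Γ` of a finite poset `P`. -/
def upIdeal (Γ : Finset P) : Finset P :=
  Finset.univ.filter (fun x => ∃ γ ∈ Γ, γ ≤ x)

/-- The set of maximal elements of a finite subset `S` of a poset. -/
def maxOf (S : Finset P) : Finset P :=
  S.filter (fun x => ∀ y ∈ S, x ≤ y → y = x)

/-- The reverse operator `𝔛` sending an antichain `Γ` to the set of maximal
elements of `P \ I(Γ)`. -/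
def Xrev (Γ : Finset P) : Finset P :=
  maxOf (Finset.univ \ upIdeal Γ)

/-- The level set `d⁻¹(i)` of a grading function `d`. -/
def lev (d : P → ℕ) (i : ℕ) : Finset P :=
  Finset.univ.filter (fun x => d x = i)

section aux

set_option linter.unusedSectionVars false

variable {d : P → ℕ}

lemma mem_lev {i : ℕ} {x : P} : x ∈ lev d i ↔ d x = i := by
  simp [lev]

lemma d_lt_of_lt (hcov : ∀ x y : P, x ⋖ y → d y = d x + 1)
    {x y : P} (h : x < y) : d x < d y := by
  letI : DecidableRel ((· < ·) : P → P → Prop) :=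
    fun a b => decidable_of_iff _ lt_iff_le_not_ge.symm
  letI := Fintype.toLocallyFiniteOrder (α := P)
  have ht := transGen_covBy_of_lt h
  clear h
  induction ht with
  | single hc => rw [hcov _ _ hc]; omega
  | tail _ hc ih => have := hcov _ _ hc; omega

lemma exists_le_lev (hcov : ∀ x y : P, x ⋖ y → d y = d x + 1)
    (hmin : ∀ x : P, d x = 1 ↔ IsMin x)
    {i : ℕ} (hi : 1 ≤ i) : ∀ n (x : P), d x = n → i ≤ n → ∃ γ, γ ≤ x ∧ d γ = i := by
  intro n
  induction n with
  | zero => intro x hx hn; omega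
  | succ n ih =>
    intro x hx hn
    rcases eq_or_lt_of_le hn with h | h
    · exact ⟨x, le_rfl, by omega⟩
    · have hx1 : d x ≠ 1 := by omega
      have : ¬ IsMin x := fun h => hx1 ((hmin x).2 h)
      obtain ⟨y, hy⟩ := exists_covBy_of_wellFoundedGT this
      have hdy : d x = d y + 1 := hcov _ _ hy
      obtain ⟨γ, hγ, hdγ⟩ := ih y (by omega) (by omega)
      exact ⟨γ, hγ.trans hy.le, hdγ⟩

lemma upIdeal_lev (hcov : ∀ x y : P, x ⋖ y → d y = d x + 1)
    (hmin : ∀ x : P, d x = 1 ↔ IsMin x) {i : ℕ} (hi : 1 ≤ i) :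
    upIdeal (lev d i) = Finset.univ.filter (fun x => i ≤ d x) := by
  ext x
  simp only [upIdeal, mem_filter, mem_univ, true_and]
  constructor
  · rintro ⟨γ, hγ, hle⟩
    rw [mem_lev] at hγ
    rcases eq_or_lt_of_le hle with rfl | h
    · omega
    · have := d_lt_of_lt hcov h; omega
  · intro h
    obtain ⟨γ, hγ, hdγ⟩ := exists_le_lev hcov hmin hi (d x) x rfl h
    exact ⟨γ, mem_lev.2 hdγ, hγ⟩

lemma compl_upIdeal_lev (hcov : ∀ x y : P, x ⋖ y → d y = d x + 1)
    (hmin : ∀ x : P, d x = 1 ↔ IsMin x) {i : ℕ} (hi : 1 ≤ i) :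
    Finset.univ \ upIdeal (lev d i) = Finset.univ.filter (fun x => d x < i) := by
  rw [upIdeal_lev hcov hmin hi]
  ext x
  simp only [mem_sdiff, mem_filter, mem_univ, true_and]
  omega

lemma Xrev_lev (r : ℕ) (hcov : ∀ x y : P, x ⋖ y → d y = d x + 1)
    (hmin : ∀ x : P, d x = 1 ↔ IsMin x)
    (hmax : ∀ x : P, d x = r ↔ IsMax x)
    {i : ℕ} (h2 : 2 ≤ i) (hir : i ≤ r) : Xrev (lev d i) = lev d (i - 1) := by
  rw [Xrev, compl_upIdeal_lev hcov hmin (by omega : 1 ≤ i)]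
  ext x
  simp only [maxOf, mem_filter, mem_univ, true_and, mem_lev]
  constructor
  · rintro ⟨hx, hmaxl⟩
    by_contra hne
    have hdx : d x < i - 1 := by omega
    have hxr : d x ≠ r := by omega
    have : ¬ IsMax x := fun h => hxr ((hmax x).2 h)
    obtain ⟨y, hy⟩ := exists_covBy_of_wellFoundedLT this
    have hdy : d y = d x + 1 := hcov _ _ hy
    have := hmaxl y (by omega) hy.le
    rw [this] at hdy
    omega
  · intro hx
    refine ⟨by omega, fun y hy hle => ?_⟩
    rcases eq_or_lt_of_le hle with rfl | h
    · rfl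
    · have := d_lt_of_lt hcov h; omega

lemma Xrev_lev_one (hmin : ∀ x : P, d x = 1 ↔ IsMin x)
    (hd1 : ∀ x, 1 ≤ d x) : Xrev (lev d 1) = (∅ : Finset P) := by
  have : upIdeal (lev d 1) = Finset.univ := by
    ext x
    simp only [upIdeal, mem_filter, mem_univ, true_and, iff_true]
    obtain ⟨γ, hle, hγ⟩ := exists_minimal_le_of_wellFoundedLT (· ∈ (Finset.univ : Finset P)) x (mem_univ x)
    have hγmin : IsMin γ := fun b hb => hγ.2 (mem_univ b) hb
    exact ⟨γ, mem_lev.2 ((hmin γ).2 hγmin), hle⟩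
  simp [Xrev, this, maxOf]

lemma Xrev_empty (r : ℕ) (hmax : ∀ x : P, d x = r ↔ IsMax x) :
    Xrev (∅ : Finset P) = lev d r := by
  have h0 : upIdeal (∅ : Finset P) = ∅ := by simp [upIdeal]
  ext x
  simp only [Xrev, h0, maxOf, sdiff_empty, mem_filter, mem_univ, true_and, mem_lev]
  constructor
  · intro h
    exact (hmax x).2 fun y hy => (h y trivial hy).le
  · intro h y _ hle
    exact le_antisymm (((hmax x).1 h) hle) hle

end aux

/-- If `P` is a finite poset graded of level `r` by `d : P → {1,…,r}` with
`d⁻¹(1) = P_min` and `d⁻¹(r) = P_max`, then the reverse operator `𝔛` satisfies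
`𝔛(d⁻¹(i)) = d⁻¹(i-1)` for `2 ≤ i ≤ r`, `𝔛(d⁻¹(1)) = ∅` and `𝔛(∅) = d⁻¹(r)`;
hence `{∅, d⁻¹(r), …, d⁻¹(1)}` is an `𝔛`-orbit of cardinality `r + 1`. -/
theorem stmt0 (r : ℕ) (hr : 1 ≤ r) (d : P → ℕ)
    (hd : ∀ x, d x ∈ Finset.Icc 1 r)
    (h1 : (lev d 1).Nonempty) (hrne : (lev d r).Nonempty)
    (hcov : ∀ x y : P, x ⋖ y → d y = d x + 1)
    (hmin : ∀ x : P, d x = 1 ↔ IsMin x)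
    (hmax : ∀ x : P, d x = r ↔ IsMax x) :
    (∀ i, 2 ≤ i → i ≤ r → Xrev (lev d i) = lev d (i - 1)) ∧
    Xrev (lev d 1) = (∅ : Finset P) ∧
    Xrev (∅ : Finset P) = lev d r ∧
    Xrev^[r + 1] (∅ : Finset P) = (∅ : Finset P) ∧
    (insert (∅ : Finset P) ((Finset.Icc 1 r).image (lev d))).card = r + 1 := by
  have hd1 : ∀ x, 1 ≤ d x := fun x => (Finset.mem_Icc.1 (hd x)).1
  have hstep : ∀ i, 2 ≤ i → i ≤ r → Xrev (lev d i) = lev d (i - 1) :=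
    fun i h2 hir => Xrev_lev r hcov hmin hmax h2 hir
  have hone : Xrev (lev d 1) = (∅ : Finset P) := Xrev_lev_one hmin hd1
  have hemp : Xrev (∅ : Finset P) = lev d r := Xrev_empty r hmax
  have hlevne : ∀ i, 1 ≤ i → i ≤ r → (lev d i).Nonempty := by
    intro i h1i hir
    obtain ⟨m, hm⟩ := hrne
    rw [mem_lev] at hm
    obtain ⟨γ, _, hdγ⟩ := exists_le_lev hcov hmin h1i (d m) m rfl (by omega)
    exact ⟨γ, mem_lev.2 hdγ⟩
  have hiter : ∀ k, k ≤ r - 1 → Xrev^[k + 1] (∅ : Finset P) = lev d (r - k) := by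
    intro k
    induction k with
    | zero => intro _; simpa using hemp
    | succ k ih =>
      intro hk
      rw [Function.iterate_succ_apply', ih (by omega), hstep (r - k) (by omega) (by omega),
        Nat.sub_sub]
  have hfull : Xrev^[r + 1] (∅ : Finset P) = (∅ : Finset P) := by
    have h : r + 1 = (r - 1 + 1) + 1 := by omega
    rw [h, Function.iterate_succ_apply', hiter (r - 1) le_rfl]
    have h2 : r - (r - 1) = 1 := by omega
    rw [h2, hone]
  refine ⟨hstep, hone, hemp, hfull, ?_⟩
  have hinj : Set.InjOn (lev d) (Finset.Icc 1 r) := by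
    intro i hi j hj hij
    simp only [coe_Icc, Set.mem_Icc] at hi hj
    obtain ⟨x, hx⟩ := hlevne i hi.1 hi.2
    have hx' : x ∈ lev d j := hij ▸ hx
    rw [mem_lev] at hx hx'
    omega
  rw [Finset.card_insert_of_notMem, Finset.card_image_of_injOn hinj, Nat.card_Icc]
  · omega
  · simp only [Finset.mem_image, not_exists]
    rintro i ⟨hi, h⟩
    simp only [Finset.mem_Icc] at hi
    obtain ⟨x, hx⟩ := hlevne i hi.1 hi.2
    rw [h] at hx
    exact absurd hx (Finset.notMem_empty x)
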